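/- Let R be a multivariate Gaussian over a finite set X with pointwise standard deviations σ_{R_x} ≤ 1, observed at locations x¹,…,x^T with independent Gaussian observation noise of standard deviation σ_n(x^t) ≤ σ_n. Then the maximum information gain γ^T := max over location sequences of I(Y_{L^T}; R) satisfies γ^T ≥ (ln(1 + σ_n^{-2})/2) · Σ_{t=1}^T σ²_{R_x^t}, where σ²_{R_x^t} denotes the posterior variance at x^t after conditioning on the first t−1 observations. -/

import Mathlib

open Matrix

/-- Posterior covariance matrix of a Gaussian vector with prior covariance `K` after
conditioning on `t` noisy observations at locations `L 0, …, L (t−1)`, with observation-noise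
standard deviations `σn`. (Standard rank-one Gaussian conditioning updates.) -/
noncomputable def postCov {X : Type*} (K : Matrix X X ℝ) (σn : X → ℝ) (L : ℕ → X) :
    ℕ → Matrix X X ℝ
  | 0 => K
  | t + 1 => fun a b =>
      postCov K σn L t a b -
        postCov K σn L t a (L t) * postCov K σn L t (L t) b /
          (postCov K σn L t (L t) (L t) + σn (L t) ^ 2)

/-- The information gain `I(Y_{L^T}; R) = (1/2) Σ_{t<T} ln(1 + σ_n(x^t)⁻² σ²_{R_{x^t}})`
of `T` Gaussian observations at locations `L`, where `σ²_{R_{x^t}}` is the posterior variance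
at `x^t` after conditioning on the first `t` observations. -/
noncomputable def infoGain {X : Type*} (K : Matrix X X ℝ) (σn : X → ℝ) (T : ℕ)
    (L : ℕ → X) : ℝ :=
  (1 / 2) * ∑ t ∈ Finset.range T,
    Real.log (1 + postCov K σn L t (L t) (L t) / σn (L t) ^ 2)

section Aux
variable {n : Type*} [Fintype n]

lemma psd_diag_nonneg (A : Matrix n n ℝ) (hA : A.PosSemidef) (l : n) : 0 ≤ A l l := by
  classical
  have h := hA.dotProduct_mulVec_nonneg (Pi.single l 1)
  simpa [dotProduct, mulVec, Pi.single_apply] using h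

lemma psd_cs (A : Matrix n n ℝ) (hA : A.PosSemidef)
    (x : n → ℝ) (l : n) : ((A *ᵥ x) l)^2 ≤ (x ⬝ᵥ A *ᵥ x) * A l l := by
  classical
  set e : n → ℝ := Pi.single l 1 with he
  have h1 : e ⬝ᵥ A *ᵥ x = (A *ᵥ x) l := by
    simp [he, dotProduct, Pi.single_apply]
  have h2 : x ⬝ᵥ A *ᵥ e = (A *ᵥ x) l := by
    rw [dotProduct_mulVec, ← hA.1.eq]
    simp [he, vecMul, dotProduct, Pi.single_apply, mulVec, conjTranspose_apply]
    exact Finset.sum_congr rfl fun i _ => by rw [← hA.1.apply l i]; simp [mul_comm]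
  have h3 : e ⬝ᵥ A *ᵥ e = A l l := by
    simp [he, dotProduct, mulVec, Pi.single_apply]
  have key : ∀ t : ℝ, 0 ≤ A l l * (t*t) + (2 * (A *ᵥ x) l) * t + x ⬝ᵥ A *ᵥ x := by
    intro t
    have h := hA.dotProduct_mulVec_nonneg (x + t • e)
    simp only [star_trivial] at h
    have expand : (x + t • e) ⬝ᵥ A *ᵥ (x + t • e)
        = x ⬝ᵥ A *ᵥ x + t * (x ⬝ᵥ A *ᵥ e) + t * (e ⬝ᵥ A *ᵥ x)
          + t * t * (e ⬝ᵥ A *ᵥ e) := by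
      simp only [dotProduct_add, add_dotProduct, mulVec_add, mulVec_smul, dotProduct_smul,
        smul_dotProduct, smul_eq_mul]
      ring
    rw [expand, h1, h2, h3] at h
    linarith
  have := discrim_le_zero key
  unfold discrim at this
  nlinarith [this]

lemma psd_sym (A : Matrix n n ℝ) (hA : A.PosSemidef) (a b : n) : A a b = A b a := by
  have := hA.1.apply a b
  simpa using this.symm

end Aux

section Post
variable {X : Type*} [Fintype X] (K : Matrix X X ℝ) (σn : X → ℝ) (L : ℕ → X)

lemma postCov_psd (hK : K.PosSemidef) (hσpos : ∀ x, 0 < σn x) (t : ℕ) :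
    (postCov K σn L t).PosSemidef := by
  induction t with
  | zero => exact hK
  | succ t ih =>
    set A := postCov K σn L t with hA
    set l := L t with hl
    set d : ℝ := A l l + σn l ^ 2 with hd
    have hdpos : 0 < d := by
      have := psd_diag_nonneg A ih l
      have := hσpos l
      positivity
    have hsym : ∀ a b, A a b = A b a := psd_sym A ih
    refine Matrix.PosSemidef.of_dotProduct_mulVec_nonneg ?_ ?_
    · show (postCov K σn L (t+1))ᴴ = _
      ext a b
      show star (postCov K σn L (t+1) b a) = postCov K σn L (t+1) a b
      simp only [postCov, star_trivial, ← hA, ← hl, ← hd]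
      rw [hsym b a, hsym b l, hsym l a]
      ring
    · intro x
      simp only [star_trivial]
      have mv : ∀ a, ((postCov K σn L (t+1)) *ᵥ x) a = (A *ᵥ x) a - A a l * (A *ᵥ x) l / d := by
        intro a
        show ∑ b, (A a b - A a l * A l b / d) * x b = _
        have : ∀ b, (A a b - A a l * A l b / d) * x b
            = A a b * x b - (A a l / d) * (A l b * x b) := fun b => by ring
        simp_rw [this]
        rw [Finset.sum_sub_distrib, ← Finset.mul_sum]
        simp [mulVec, dotProduct]
        ring
      have dot : x ⬝ᵥ (postCov K σn L (t+1)) *ᵥ x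
          = x ⬝ᵥ A *ᵥ x - ((A *ᵥ x) l)^2 / d := by
        show ∑ a, x a * ((postCov K σn L (t+1)) *ᵥ x) a = _
        simp_rw [mv]
        have : ∀ a, x a * ((A *ᵥ x) a - A a l * (A *ᵥ x) l / d)
            = x a * (A *ᵥ x) a - ((A *ᵥ x) l / d) * (x a * A a l) := fun a => by ring
        simp_rw [this]
        rw [Finset.sum_sub_distrib, ← Finset.mul_sum]
        have hw : ∑ a, x a * A a l = (A *ᵥ x) l := by
          simp only [mulVec, dotProduct]
          exact Finset.sum_congr rfl fun i _ => by rw [hsym l i]; ring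
        rw [hw]
        simp [dotProduct]
        ring
      rw [dot]
      have hcs := psd_cs A ih x l
      have hQ : 0 ≤ x ⬝ᵥ A *ᵥ x := by simpa using ih.dotProduct_mulVec_nonneg x
      have h1 : ((A *ᵥ x) l)^2 ≤ (x ⬝ᵥ A *ᵥ x) * d := by
        calc ((A *ᵥ x) l)^2 ≤ (x ⬝ᵥ A *ᵥ x) * A l l := hcs
          _ ≤ (x ⬝ᵥ A *ᵥ x) * d := by
              apply mul_le_mul_of_nonneg_left _ hQ
              nlinarith [sq_nonneg (σn l)]
      rw [sub_nonneg, div_le_iff₀ hdpos]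
      linarith

lemma postCov_diag_le (hK : K.PosSemidef) (hσpos : ∀ x, 0 < σn x) (t : ℕ) (a : X) :
    postCov K σn L t a a ≤ K a a := by
  induction t with
  | zero => exact le_refl _
  | succ t ih =>
    have hpsd := postCov_psd K σn L hK hσpos t
    set A := postCov K σn L t with hA
    set l := L t with hl
    have hdpos : 0 < A l l + σn l ^ 2 := by
      have := psd_diag_nonneg A hpsd l
      have := hσpos l
      positivity
    have : postCov K σn L (t+1) a a = A a a - (A a l)^2 / (A l l + σn l ^2) := by
      show A a a - A a l * A l a / _ = _
      rw [psd_sym A hpsd l a]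
      ring
    rw [this]
    have : 0 ≤ (A a l)^2 / (A l l + σn l ^2) := by positivity
    linarith

end Post


/-- for a Gaussian vector with pointwise variances `K_{x,x} ≤ 1` observed with
independent Gaussian noise of standard deviation `σ_n(x) ≤ σ_n`, the maximum information gain
`γ^T = max_{L^T} I(Y_{L^T}; R)` satisfies
`γ^T ≥ (ln(1 + σ_n⁻²)/2) · Σ_{t<T} σ²_{R_{x^t}}` for any location sequence `L`. -/
theorem stmt_10 {X : Type*} [Fintype X] [Nonempty X] (K : Matrix X X ℝ) (hK : K.PosSemidef)
    (hKdiag : ∀ x, K x x ≤ 1) (σn : X → ℝ) (σmax : ℝ) (hσpos : ∀ x, 0 < σn x)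
    (hσle : ∀ x, σn x ≤ σmax) (T : ℕ) (L : ℕ → X) :
    (Real.log (1 + σmax⁻¹ ^ 2) / 2) *
        ∑ t ∈ Finset.range T, postCov K σn L t (L t) (L t) ≤
      sSup {g : ℝ | ∃ L' : ℕ → X, g = infoGain K σn T L'} := by
  obtain ⟨x0⟩ := ‹Nonempty X›
  have hσmax : 0 < σmax := lt_of_lt_of_le (hσpos x0) (hσle x0)
  -- diag bounds
  have hdiag : ∀ (L' : ℕ → X) (t : ℕ) (a : X),
      0 ≤ postCov K σn L' t a a ∧ postCov K σn L' t a a ≤ 1 := by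
    intro L' t a
    exact ⟨psd_diag_nonneg _ (postCov_psd K σn L' hK hσpos t) a,
      le_trans (postCov_diag_le K σn L' hK hσpos t a) (hKdiag a)⟩
  -- key scalar inequality
  have key : ∀ (s : ℝ) (x : X), 0 ≤ s → s ≤ 1 →
      Real.log (1 + σmax⁻¹ ^ 2) * s ≤ Real.log (1 + s / σn x ^ 2) := by
    intro s x hs0 hs1
    have c := σmax⁻¹ ^ 2
    have hc0 : (0:ℝ) ≤ σmax⁻¹ ^ 2 := by positivity
    have step1 : s * Real.log (1 + σmax⁻¹ ^ 2) ≤ Real.log (1 + s * σmax⁻¹ ^ 2) := by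
      have hcv := strictConcaveOn_log_Ioi.concaveOn.2
        (show (1:ℝ) ∈ Set.Ioi (0:ℝ) from Set.mem_Ioi.2 one_pos)
        (show (1 + σmax⁻¹ ^ 2 : ℝ) ∈ Set.Ioi (0:ℝ) from Set.mem_Ioi.2 (by positivity))
        (show (0:ℝ) ≤ 1 - s by linarith) hs0 (by ring)
      simp only [smul_eq_mul, Real.log_one, mul_zero, zero_add] at hcv
      have : (1-s) * 1 + s * (1 + σmax⁻¹ ^ 2) = 1 + s * σmax⁻¹ ^ 2 := by ring
      rwa [this] at hcv
    have step2 : Real.log (1 + s * σmax⁻¹ ^ 2) ≤ Real.log (1 + s / σn x ^ 2) := by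
      apply Real.log_le_log (by positivity)
      have h1 : σmax⁻¹ ^ 2 ≤ (σn x)⁻¹ ^ 2 := by
        have := hσpos x
        have h := inv_anti₀ (hσpos x) (hσle x)
        nlinarith [inv_pos.2 hσmax, inv_pos.2 (hσpos x)]
      have : s * σmax⁻¹ ^ 2 ≤ s * (σn x)⁻¹ ^ 2 := mul_le_mul_of_nonneg_left h1 hs0
      have heq : s / σn x ^ 2 = s * (σn x)⁻¹ ^ 2 := by
        rw [div_eq_mul_inv, ← inv_pow]
      linarith [heq ▸ this]
    calc Real.log (1 + σmax⁻¹ ^ 2) * s = s * Real.log (1 + σmax⁻¹ ^ 2) := mul_comm _ _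
      _ ≤ _ := le_trans step1 step2
  -- LHS ≤ infoGain K σn T L
  have hmain : (Real.log (1 + σmax⁻¹ ^ 2) / 2) *
      ∑ t ∈ Finset.range T, postCov K σn L t (L t) (L t) ≤ infoGain K σn T L := by
    have hLHS : (Real.log (1 + σmax⁻¹ ^ 2) / 2) *
        ∑ t ∈ Finset.range T, postCov K σn L t (L t) (L t)
        = ∑ t ∈ Finset.range T,
            (1/2) * (Real.log (1 + σmax⁻¹ ^ 2) * postCov K σn L t (L t) (L t)) := by
      rw [Finset.mul_sum]
      exact Finset.sum_congr rfl fun t _ => by ring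
    rw [hLHS]
    unfold infoGain
    rw [Finset.mul_sum]
    apply Finset.sum_le_sum
    intro t _
    have h := key (postCov K σn L t (L t) (L t)) (L t) (hdiag L t (L t)).1 (hdiag L t (L t)).2
    linarith
  -- bddAbove
  obtain ⟨b, hb⟩ : ∃ b : ℝ, ∀ x : X, Real.log (1 + 1 / σn x ^ 2) ≤ b := by
    obtain ⟨x, -, hx⟩ := Finset.exists_max_image Finset.univ
      (fun x : X => Real.log (1 + 1 / σn x ^ 2)) ⟨x0, Finset.mem_univ x0⟩
    exact ⟨_, fun y => hx y (Finset.mem_univ y)⟩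
  have hbdd : BddAbove {g : ℝ | ∃ L' : ℕ → X, g = infoGain K σn T L'} := by
    refine ⟨(1/2) * (T * b), ?_⟩
    rintro g ⟨L', rfl⟩
    unfold infoGain
    apply mul_le_mul_of_nonneg_left _ (by norm_num : (0:ℝ) ≤ 1/2)
    calc ∑ t ∈ Finset.range T, Real.log (1 + postCov K σn L' t (L' t) (L' t) / σn (L' t) ^ 2)
        ≤ ∑ t ∈ Finset.range T, b := by
          apply Finset.sum_le_sum
          intro t _
          refine le_trans ?_ (hb (L' t))
          apply Real.log_le_log (by
            have := (hdiag L' t (L' t)).1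
            positivity)
          have h1 := (hdiag L' t (L' t)).2
          have h0 := (hdiag L' t (L' t)).1
          have := sq_nonneg (σn (L' t))
          have hp := pow_pos (hσpos (L' t)) 2
          have : postCov K σn L' t (L' t) (L' t) / σn (L' t) ^ 2 ≤ 1 / σn (L' t) ^ 2 := by
            gcongr
          linarith
      _ = T * b := by simp [Finset.sum_const, nsmul_eq_mul]
  exact le_trans hmain (le_csSup hbdd ⟨L, rfl⟩)
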